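/- Let p ∈ [1,∞) and let (X,d_X), (Y,d_Y) be nonempty compact metric spaces each satisfying the p-triangle inequality. Then inf over correspondences R of sup_{(x,y),(x',y')∈R} Λ_p( d_X^{(∞)}(x,x'), d_Y^{(∞)}(y,y') ) ≤ inf over correspondences R of sup_{(x,y),(x',y')∈R} Λ_p( d_X(x,x'), d_Y(y,y') ); that is, the subdominant-ultrametric projection 𝔖_∞ is 1-Lipschitz with respect to d_GH^{(p)}: d_GH^{(p)}(𝔖_∞X, 𝔖_∞Y) ≤ d_GH^{(p)}(X,Y). -/

import Mathlib

open scoped NNReal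

noncomputable section

/-- A correspondence between `X` and `Y`. -/
def IsCorrespondence {X Y : Type*} (R : Set (X × Y)) : Prop :=
  (∀ x : X, ∃ y : Y, (x, y) ∈ R) ∧ ∀ y : Y, ∃ x : X, (x, y) ∈ R

/-- `Λ_p(a,b) = |a^p - b^p|^(1/p)`. -/
def lambdaP (p a b : ℝ) : ℝ := |a ^ p - b ^ p| ^ (1 / p)

/-- The subdominant ultrametric construction `d^{(∞)}`: the infimum over finite chains
`x = x_0, x_1, …, x_n = x'` of `max_{0 ≤ i < n} d(x_i, x_{i+1})`. -/
def subUltra {X : Type*} [MetricSpace X] (x x' : X) : ℝ :=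
  sInf {r : ℝ | ∃ n : ℕ, ∃ c : ℕ → X, c 0 = x ∧ c n = x' ∧
    NNReal.toReal ((Finset.range n).sup fun i => nndist (c i) (c (i + 1))) = r}

lemma lambdaP_nonneg (p a b : ℝ) : 0 ≤ lambdaP p a b :=
  Real.rpow_nonneg (abs_nonneg _) _

section subUltraLemmas

variable {Z : Type*} [MetricSpace Z]

lemma chainSet_bddBelow (x x' : Z) :
    BddBelow {r : ℝ | ∃ n : ℕ, ∃ c : ℕ → Z, c 0 = x ∧ c n = x' ∧
      NNReal.toReal ((Finset.range n).sup fun i => nndist (c i) (c (i + 1))) = r} := by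
  refine ⟨0, ?_⟩
  rintro r ⟨n, c, _, _, rfl⟩
  exact NNReal.coe_nonneg _

lemma subUltra_nonneg (x x' : Z) : 0 ≤ subUltra x x' :=
  Real.sInf_nonneg (by rintro r ⟨n, c, _, _, rfl⟩; exact NNReal.coe_nonneg _)

lemma subUltra_le_chain (x x' : Z) (n : ℕ) (c : ℕ → Z) (h0 : c 0 = x) (hn : c n = x') :
    subUltra x x' ≤
      NNReal.toReal ((Finset.range n).sup fun i => nndist (c i) (c (i + 1))) :=
  csInf_le (chainSet_bddBelow x x') ⟨n, c, h0, hn, rfl⟩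

lemma subUltra_le_dist (x x' : Z) : subUltra x x' ≤ dist x x' := by
  have h := subUltra_le_chain x x' 1 (fun i => if i = 0 then x else x') rfl (by simp)
  simpa [Finset.sup_singleton, ← coe_nndist] using h

end subUltraLemmas

/-- Chainwise transfer: along a correspondence with distortion control, a chain in `X`
gives a chain in `Y` with controlled max step. -/
lemma subUltra_chain_bound {X Y : Type*} [MetricSpace X] [MetricSpace Y]
    {p ε : ℝ} (hp : 0 < p) (hε : 0 ≤ ε)
    {R : Set (X × Y)} (hRX : ∀ x : X, ∃ y : Y, (x, y) ∈ R)
    (hd : ∀ a ∈ R, ∀ b ∈ R, dist a.2 b.2 ^ p ≤ dist a.1 b.1 ^ p + ε ^ p)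
    {x x' : X} {y y' : Y} (hxy : (x, y) ∈ R) (hxy' : (x', y') ∈ R)
    {r : ℝ} (hr : ∃ n : ℕ, ∃ c : ℕ → X, c 0 = x ∧ c n = x' ∧
      NNReal.toReal ((Finset.range n).sup fun i => nndist (c i) (c (i + 1))) = r) :
    subUltra y y' ≤ (r ^ p + ε ^ p) ^ (1 / p) := by
  obtain ⟨n, c, h0, hn, hrval⟩ := hr
  have hr0 : 0 ≤ r := hrval ▸ NNReal.coe_nonneg _
  have hB0 : 0 ≤ (r ^ p + ε ^ p) ^ (1 / p) :=
    Real.rpow_nonneg (by positivity) _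
  -- generic step bound: if (a,b) and (a',b') ∈ R and dist a a' ≤ r then dist b b' ≤ B
  have step : ∀ a b a' b', (a, b) ∈ R → (a', b') ∈ R → dist a a' ≤ r →
      dist b b' ≤ (r ^ p + ε ^ p) ^ (1 / p) := by
    intro a b a' b' h1 h2 hle
    have h3 : dist b b' ^ p ≤ r ^ p + ε ^ p := by
      refine (hd _ h1 _ h2).trans (add_le_add_left ?_ _)
      exact Real.rpow_le_rpow dist_nonneg hle hp.le
    calc dist b b' = (dist b b' ^ p) ^ (1 / p) := by
          rw [one_div, Real.rpow_rpow_inv dist_nonneg hp.ne']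
      _ ≤ (r ^ p + ε ^ p) ^ (1 / p) :=
          Real.rpow_le_rpow (by positivity) h3 (by positivity)
  rcases Nat.eq_zero_or_pos n with rfl | hn1
  · -- then x = x' and r = 0
    have hxx : x = x' := h0 ▸ hn
    have hr00 : r = 0 := by simpa using hrval.symm
    subst hxx
    refine (subUltra_le_dist y y').trans ?_
    exact step x y x y' hxy hxy' (by simp [hr00])
  · -- build the companion chain in Y
    set c' : ℕ → Y := fun i => if i = 0 then y else if n ≤ i then y'
      else (hRX (c i)).choose with hc'
    have hP : ∀ i, i ≤ n → (c i, c' i) ∈ R := by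
      intro i hi
      rcases eq_or_ne i 0 with rfl | hi0
      · simpa [hc', h0] using hxy
      rcases eq_or_lt_of_le hi with rfl | hlt
      · have hci : c' i = y' := by simp [hc', hi0]
        rw [hci, hn]; exact hxy'
      · have hci : c' i = (hRX (c i)).choose := by
          simp [hc', hi0, not_le.mpr hlt]
        rw [hci]; exact (hRX (c i)).choose_spec
    have hstep : ∀ i ∈ Finset.range n,
        dist (c' i) (c' (i + 1)) ≤ (r ^ p + ε ^ p) ^ (1 / p) := by
      intro i hi
      rw [Finset.mem_range] at hi
      have hle : dist (c i) (c (i + 1)) ≤ r := by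
        rw [← hrval, dist_nndist]
        exact_mod_cast Finset.le_sup (f := fun i => nndist (c i) (c (i + 1)))
          (Finset.mem_range.mpr hi)
      exact step _ _ _ _ (hP i hi.le) (hP (i + 1) hi) hle
    have hsup : NNReal.toReal ((Finset.range n).sup fun i => nndist (c' i) (c' (i + 1)))
        ≤ (r ^ p + ε ^ p) ^ (1 / p) := by
      have : ((Finset.range n).sup fun i => nndist (c' i) (c' (i + 1)))
          ≤ Real.toNNReal ((r ^ p + ε ^ p) ^ (1 / p)) := by
        refine Finset.sup_le fun i hi => ?_
        rw [Real.le_toNNReal_iff_coe_le hB0, coe_nndist]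
        exact hstep i hi
      have h2 : (((Finset.range n).sup fun i => nndist (c' i) (c' (i + 1))) : ℝ≥0).toReal
          ≤ (Real.toNNReal ((r ^ p + ε ^ p) ^ (1 / p)) : ℝ≥0).toReal := NNReal.coe_le_coe.mpr this
      rwa [Real.coe_toNNReal _ hB0] at h2
    refine (subUltra_le_chain y y' n c' ?_ ?_).trans hsup
    · simp [hc']
    · simp [hc', hn1.ne']

/-- Transfer of the subdominant ultrametric along a correspondence. -/
lemma subUltra_transfer {X Y : Type*} [MetricSpace X] [MetricSpace Y]
    {p ε : ℝ} (hp : 0 < p) (hε : 0 ≤ ε)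
    {R : Set (X × Y)} (hRX : ∀ x : X, ∃ y : Y, (x, y) ∈ R)
    (hd : ∀ a ∈ R, ∀ b ∈ R, dist a.2 b.2 ^ p ≤ dist a.1 b.1 ^ p + ε ^ p)
    {x x' : X} {y y' : Y} (hxy : (x, y) ∈ R) (hxy' : (x', y') ∈ R) :
    subUltra y y' ^ p ≤ subUltra x x' ^ p + ε ^ p := by
  set u := subUltra y y' with hu
  have hu0 : 0 ≤ u := subUltra_nonneg y y'
  rcases le_or_gt (u ^ p) (ε ^ p) with h | h
  · exact h.trans (le_add_of_nonneg_left (Real.rpow_nonneg (subUltra_nonneg x x') p))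
  · set t := (u ^ p - ε ^ p) ^ (1 / p) with ht
    have hsub0 : 0 ≤ u ^ p - ε ^ p := sub_nonneg.mpr h.le
    have htle : t ≤ subUltra x x' := by
      refine le_csInf ⟨dist x x', 1, fun i => if i = 0 then x else x', rfl, by simp, by
        simp [Finset.sup_singleton, ← coe_nndist]⟩ ?_
      rintro r hr
      have hr0 : 0 ≤ r := by obtain ⟨n, c, _, _, rfl⟩ := hr; exact NNReal.coe_nonneg _
      have hub : u ≤ (r ^ p + ε ^ p) ^ (1 / p) :=
        subUltra_chain_bound hp hε hRX hd hxy hxy' hr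
      have hup : u ^ p ≤ r ^ p + ε ^ p := by
        have := Real.rpow_le_rpow hu0 hub hp.le
        rwa [one_div, Real.rpow_inv_rpow (by positivity) hp.ne'] at this
      have : u ^ p - ε ^ p ≤ r ^ p := by linarith
      calc t ≤ (r ^ p) ^ (1 / p) :=
            Real.rpow_le_rpow hsub0 this (by positivity)
        _ = r := by rw [one_div, Real.rpow_rpow_inv hr0 hp.ne']
    have htp : t ^ p = u ^ p - ε ^ p := by
      rw [ht, one_div, Real.rpow_inv_rpow hsub0 hp.ne']
    have ht0 : 0 ≤ t := Real.rpow_nonneg hsub0 _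
    have := Real.rpow_le_rpow ht0 htle hp.le
    rw [htp] at this
    linarith

theorem subUltra_stable_dGHp (p : ℝ) (hp : 1 ≤ p)
    (X Y : Type)
    [MetricSpace X] [CompactSpace X] [Nonempty X]
    [MetricSpace Y] [CompactSpace Y] [Nonempty Y]
    (hX : ∀ x y z : X, dist x z ^ p ≤ dist x y ^ p + dist y z ^ p)
    (hY : ∀ x y z : Y, dist x z ^ p ≤ dist x y ^ p + dist y z ^ p) :
    sInf {r : ℝ | ∃ R : Set (X × Y), IsCorrespondence R ∧
        r = sSup {s : ℝ | ∃ a ∈ R, ∃ b ∈ R,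
          s = lambdaP p (subUltra a.1 b.1) (subUltra a.2 b.2)}} ≤
      sInf {r : ℝ | ∃ R : Set (X × Y), IsCorrespondence R ∧
        r = sSup {s : ℝ | ∃ a ∈ R, ∃ b ∈ R,
          s = lambdaP p (dist a.1 b.1) (dist a.2 b.2)}} := by
  have hp0 : (0 : ℝ) < p := lt_of_lt_of_le one_pos hp
  -- the right-hand set is nonempty
  have hBne : {r : ℝ | ∃ R : Set (X × Y), IsCorrespondence R ∧
      r = sSup {s : ℝ | ∃ a ∈ R, ∃ b ∈ R,
        s = lambdaP p (dist a.1 b.1) (dist a.2 b.2)}}.Nonempty := by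
    refine ⟨_, Set.univ, ⟨fun x => ⟨Classical.arbitrary Y, trivial⟩,
      fun y => ⟨Classical.arbitrary X, trivial⟩⟩, rfl⟩
  -- left set is bounded below by 0
  have hAbdd : BddBelow {r : ℝ | ∃ R : Set (X × Y), IsCorrespondence R ∧
      r = sSup {s : ℝ | ∃ a ∈ R, ∃ b ∈ R,
        s = lambdaP p (subUltra a.1 b.1) (subUltra a.2 b.2)}} := by
    refine ⟨0, ?_⟩
    rintro r ⟨R, hR, rfl⟩
    exact Real.sSup_nonneg (by rintro s ⟨a, _, b, _, rfl⟩; exact lambdaP_nonneg _ _ _)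
  refine le_csInf hBne ?_
  rintro E ⟨R, hR, rfl⟩
  set Sd := {s : ℝ | ∃ a ∈ R, ∃ b ∈ R, s = lambdaP p (dist a.1 b.1) (dist a.2 b.2)}
    with hSd
  set E := sSup Sd with hE
  have hE0 : 0 ≤ E := Real.sSup_nonneg
    (by rintro s ⟨a, _, b, _, rfl⟩; exact lambdaP_nonneg _ _ _)
  -- Sd is bounded above by a diameter bound
  have hSdbdd : BddAbove Sd := by
    set DX := Metric.diam (Set.univ : Set X)
    set DY := Metric.diam (Set.univ : Set Y)
    refine ⟨(DX ^ p + DY ^ p) ^ (1 / p), ?_⟩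
    rintro s ⟨a, _, b, _, rfl⟩
    have hdx : dist a.1 b.1 ≤ DX :=
      Metric.dist_le_diam_of_mem isCompact_univ.isBounded trivial trivial
    have hdy : dist a.2 b.2 ≤ DY :=
      Metric.dist_le_diam_of_mem isCompact_univ.isBounded trivial trivial
    have habs : |dist a.1 b.1 ^ p - dist a.2 b.2 ^ p| ≤ DX ^ p + DY ^ p := by
      refine (abs_sub _ _).trans (add_le_add ?_ ?_)
      · rw [abs_of_nonneg (Real.rpow_nonneg dist_nonneg _)]
        exact Real.rpow_le_rpow dist_nonneg hdx hp0.le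
      · rw [abs_of_nonneg (Real.rpow_nonneg dist_nonneg _)]
        exact Real.rpow_le_rpow dist_nonneg hdy hp0.le
    exact Real.rpow_le_rpow (abs_nonneg _) habs (by positivity)
  -- distortion bound from the sup
  have hdist : ∀ a ∈ R, ∀ b ∈ R,
      |dist a.1 b.1 ^ p - dist a.2 b.2 ^ p| ≤ E ^ p := by
    intro a ha b hb
    have hmem : lambdaP p (dist a.1 b.1) (dist a.2 b.2) ∈ Sd := ⟨a, ha, b, hb, rfl⟩
    have hle : lambdaP p (dist a.1 b.1) (dist a.2 b.2) ≤ E := le_csSup hSdbdd hmem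
    have := Real.rpow_le_rpow (lambdaP_nonneg _ _ _) hle hp0.le
    rwa [lambdaP, one_div, Real.rpow_inv_rpow (abs_nonneg _) hp0.ne'] at this
  have hd1 : ∀ a ∈ R, ∀ b ∈ R, dist a.2 b.2 ^ p ≤ dist a.1 b.1 ^ p + E ^ p := by
    intro a ha b hb
    have := (abs_le.mp (hdist a ha b hb)).1
    linarith
  have hd2 : ∀ a ∈ R, ∀ b ∈ R, dist a.1 b.1 ^ p ≤ dist a.2 b.2 ^ p + E ^ p := by
    intro a ha b hb
    have := (abs_le.mp (hdist a ha b hb)).2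
    linarith
  -- the swapped correspondence
  set R' : Set (Y × X) := {q | (q.2, q.1) ∈ R} with hR'
  have hR'X : ∀ y : Y, ∃ x : X, (y, x) ∈ R' := fun y => hR.2 y
  have hd2' : ∀ a ∈ R', ∀ b ∈ R', dist a.2 b.2 ^ p ≤ dist a.1 b.1 ^ p + E ^ p := by
    intro a ha b hb
    exact hd2 (a.2, a.1) ha (b.2, b.1) hb
  -- now bound the sup over the ultrametric distortions
  refine csInf_le_of_le hAbdd ⟨R, hR, rfl⟩ ?_
  refine Real.sSup_le ?_ hE0
  rintro s ⟨a, ha, b, hb, rfl⟩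
  have h1 : subUltra a.2 b.2 ^ p ≤ subUltra a.1 b.1 ^ p + E ^ p :=
    subUltra_transfer hp0 hE0 hR.1 hd1 ha hb
  have h2 : subUltra a.1 b.1 ^ p ≤ subUltra a.2 b.2 ^ p + E ^ p :=
    subUltra_transfer (X := Y) (Y := X) hp0 hE0 hR'X hd2'
      (show (a.2, a.1) ∈ R' from ha) (show (b.2, b.1) ∈ R' from hb)
  have habs : |subUltra a.1 b.1 ^ p - subUltra a.2 b.2 ^ p| ≤ E ^ p :=
    abs_le.mpr ⟨by linarith, by linarith⟩
  calc lambdaP p (subUltra a.1 b.1) (subUltra a.2 b.2)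
      ≤ (E ^ p) ^ (1 / p) :=
        Real.rpow_le_rpow (abs_nonneg _) habs (by positivity)
    _ = E := by rw [one_div, Real.rpow_rpow_inv hE0 hp0.ne']
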